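/- arXiv:2001.05711 — 2 statements merged into one kernel-verified Lean document; each statement's English description precedes it below -/
import Mathlib

section
/- With F₁^t(QW, Q̃W̃) := D(W‖P|Q) + D^t(QW, Q̃W̃) and F₂(QW, R) := D(W‖P|Q) − I(Q,W) + R, the constrained minimum over (Q,W) with E_Q[f(X)] ≤ α of max{F₁^t, F₂} further minimized over all reference distributions Q̃W̃ equals min over constrained (Q,W) of { D(W‖P|Q) + |R − I(Q,W)|^+ }. That is, adding the penalty D^t(QW, Q̃W̃) and minimizing over Q̃W̃ recovers the correct-decoding exponent. -/
open scoped BigOperators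
open Filter Topology

/-- A joint probability distribution on `X × Y`, given by a nonnegative
pmf `p` summing to one. -/
structure JointDist (X Y : Type) [Fintype X] [Fintype Y] where
  p : X → Y → ℝ
  nonneg : ∀ x y, 0 ≤ p x y
  sum_one : ∑ x : X, ∑ y : Y, p x y = 1

namespace JointDist

variable {X Y : Type} [Fintype X] [Fintype Y]

/-- `X`-marginal `Q`. -/
noncomputable def Qm (μ : JointDist X Y) (x : X) : ℝ := ∑ y : Y, μ.p x y

/-- `Y`-marginal `T`. -/
noncomputable def Tm (μ : JointDist X Y) (y : Y) : ℝ := ∑ x : X, μ.p x y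

/-- Conditional distribution `W(y|x)`. -/
noncomputable def Wc (μ : JointDist X Y) (x : X) (y : Y) : ℝ :=
  if μ.Qm x = 0 then 0 else μ.p x y / μ.Qm x

/-- Conditional distribution `V(x|y)`. -/
noncomputable def Vc (μ : JointDist X Y) (y : Y) (x : X) : ℝ :=
  if μ.Tm y = 0 then 0 else μ.p x y / μ.Tm y

end JointDist

/-- Kullback–Leibler divergence `D(p‖q)` between finite nonnegative vectors,
valued in `EReal`, with the conventions `0 log 0 = 0` and `D = ⊤` if
absolute continuity fails. -/
noncomputable def relEnt {Z : Type} [Fintype Z] (p q : Z → ℝ) : EReal :=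
  if ∀ z, q z = 0 → p z = 0 then
    (((∑ z : Z, if p z = 0 then 0 else p z * Real.log (p z / q z)) : ℝ) : EReal)
  else ⊤

/-- Conditional KL divergence `D(w‖w'|q) = ∑_a q(a) D(w(·|a)‖w'(·|a))`,
valued in `EReal` with the usual conventions. -/
noncomputable def condRelEnt {A B : Type} [Fintype A] [Fintype B]
    (q : A → ℝ) (w w' : A → B → ℝ) : EReal :=
  if ∀ a b, q a ≠ 0 → w' a b = 0 → w a b = 0 then
    (((∑ a : A, ∑ b : B, if q a * w a b = 0 then 0
        else q a * w a b * Real.log (w a b / w' a b)) : ℝ) : EReal)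
  else ⊤

variable {X Y : Type}

/-- The weighted divergence combination
`D^t(QW, Q'W') = t₁ D(Q‖Q') + t₂ D(W‖W'|Q) + t₃ D(T‖T') + t₄ D(V‖V'|T)`. -/
noncomputable def Dt [Fintype X] [Fintype Y] (t : Fin 4 → ℝ)
    (μ ν : JointDist X Y) : EReal :=
  (t 0 : EReal) * relEnt μ.Qm ν.Qm + (t 1 : EReal) * condRelEnt μ.Qm μ.Wc ν.Wc +
  (t 2 : EReal) * relEnt μ.Tm ν.Tm + (t 3 : EReal) * condRelEnt μ.Tm μ.Vc ν.Vc

/-- `D(W‖P|Q)` for the channel `P`. -/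
noncomputable def condDivP [Fintype X] [Fintype Y] (P : X → Y → ℝ)
    (μ : JointDist X Y) : EReal :=
  condRelEnt μ.Qm μ.Wc P

/-- Mutual information `I(Q,W)` of the joint law `QW`. -/
noncomputable def mutInfo [Fintype X] [Fintype Y] (μ : JointDist X Y) : ℝ :=
  ∑ x : X, ∑ y : Y, if μ.p x y = 0 then 0
    else μ.p x y * Real.log (μ.p x y / (μ.Qm x * μ.Tm y))

/-- Expected cost `E_Q[f(X)]`. -/
noncomputable def expCost [Fintype X] [Fintype Y] (f : X → ℝ)
    (μ : JointDist X Y) : ℝ :=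
  ∑ x : X, μ.Qm x * f x

/-- `F₁^t(QW, Q̃W̃) = D(W‖P|Q) + D^t(QW, Q̃W̃)`. -/
noncomputable def F1 [Fintype X] [Fintype Y] (P : X → Y → ℝ) (t : Fin 4 → ℝ)
    (μ ν : JointDist X Y) : EReal :=
  condDivP P μ + Dt t μ ν

/-- `F₂(QW, R) = D(W‖P|Q) − I(Q,W) + R`. -/
noncomputable def F2 [Fintype X] [Fintype Y] (P : X → Y → ℝ) (R : ℝ)
    (μ : JointDist X Y) : EReal :=
  condDivP P μ - ((mutInfo μ : ℝ) : EReal) + ((R : ℝ) : EReal)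

/-- `F^t(QW, Q̃W̃, R) = max{F₁^t(QW, Q̃W̃), F₂(QW, R)}`. -/
noncomputable def Fr [Fintype X] [Fintype Y] (P : X → Y → ℝ) (t : Fin 4 → ℝ)
    (R : ℝ) (μ ν : JointDist X Y) : EReal :=
  max (F1 P t μ ν) (F2 P R μ)

/-- `E_c^t(Q̃W̃, R, α)`: the constrained minimum of `F^t(·, Q̃W̃, R)`. -/
noncomputable def Ec [Fintype X] [Fintype Y] (P : X → Y → ℝ) (t : Fin 4 → ℝ)
    (f : X → ℝ) (R α : ℝ) (ν : JointDist X Y) : EReal :=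
  sInf ((fun μ => Fr P t R μ ν) '' {μ : JointDist X Y | expCost f μ ≤ α})

/-- `F^t(ρ, η, QW, Q̃W̃) = D(W‖P|Q) − ρ I(Q,W) + η E_Q[f] + (1−ρ) D^t(QW, Q̃W̃)`. -/
noncomputable def Fslope [Fintype X] [Fintype Y] (P : X → Y → ℝ) (t : Fin 4 → ℝ)
    (f : X → ℝ) (ρ η : ℝ) (μ ν : JointDist X Y) : EReal :=
  condDivP P μ - ((ρ * mutInfo μ : ℝ) : EReal) + ((η * expCost f μ : ℝ) : EReal)
    + ((1 - ρ : ℝ) : EReal) * Dt t μ ν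

/-- `E₀^t(ρ, η, Q̃W̃)`: the unconstrained minimum of `F^t(ρ, η, ·, Q̃W̃)`. -/
noncomputable def E0 [Fintype X] [Fintype Y] (P : X → Y → ℝ) (t : Fin 4 → ℝ)
    (f : X → ℝ) (ρ η : ℝ) (ν : JointDist X Y) : EReal :=
  sInf (Set.range (fun μ : JointDist X Y => Fslope P t f ρ η μ ν))


section Aux

open Finset

/-- Gibbs' inequality core: the KL sum is at least `∑ p − ∑ q`. -/
lemma gibbs_aux {Z : Type*} [Fintype Z] (p q : Z → ℝ)
    (hp : ∀ z, 0 ≤ p z) (hq : ∀ z, 0 ≤ q z)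
    (hac : ∀ z, q z = 0 → p z = 0)
    (hsum : ∑ z, q z ≤ ∑ z, p z) :
    0 ≤ ∑ z, if p z = 0 then 0 else p z * Real.log (p z / q z) := by
  have h : ∀ z, p z - q z ≤ (if p z = 0 then 0 else p z * Real.log (p z / q z)) := by
    intro z
    by_cases hz : p z = 0
    · rw [if_pos hz, hz]
      linarith [hq z]
    · rw [if_neg hz]
      have hp' : 0 < p z := lt_of_le_of_ne (hp z) (Ne.symm hz)
      have hq' : 0 < q z := lt_of_le_of_ne (hq z) (by
        intro h; exact hz (hac z h.symm))
      have hlog : Real.log (q z / p z) ≤ q z / p z - 1 :=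
        Real.log_le_sub_one_of_pos (by positivity)
      have e1 : Real.log (p z / q z) = - Real.log (q z / p z) := by
        rw [← Real.log_inv, inv_div]
      have e2 : p z * (q z / p z) = q z := by field_simp
      rw [e1]
      nlinarith [mul_le_mul_of_nonneg_left hlog hp'.le]
  calc (0:ℝ) ≤ ∑ z, (p z - q z) := by
        rw [Finset.sum_sub_distrib]; linarith
    _ ≤ _ := Finset.sum_le_sum (fun z _ => h z)

lemma relEnt_nonneg' {Z : Type} [Fintype Z] (p q : Z → ℝ)
    (hp : ∀ z, 0 ≤ p z) (hq : ∀ z, 0 ≤ q z)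
    (hsum : ∑ z, q z ≤ ∑ z, p z) : 0 ≤ relEnt p q := by
  unfold relEnt
  split
  · exact_mod_cast EReal.coe_nonneg.mpr (gibbs_aux p q hp hq (by assumption) hsum)
  · exact le_top

lemma condRelEnt_nonneg' {A B : Type} [Fintype A] [Fintype B]
    (q : A → ℝ) (w w' : A → B → ℝ)
    (hq : ∀ a, 0 ≤ q a) (hw : ∀ a b, 0 ≤ w a b) (hw' : ∀ a b, 0 ≤ w' a b)
    (hsum : ∑ a, ∑ b, q a * w' a b ≤ ∑ a, ∑ b, q a * w a b) :
    0 ≤ condRelEnt q w w' := by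
  unfold condRelEnt
  split
  · rename_i hac
    apply EReal.coe_nonneg.mpr
    have key := gibbs_aux (Z := A × B) (fun z => q z.1 * w z.1 z.2)
      (fun z => q z.1 * w' z.1 z.2)
      (fun z => mul_nonneg (hq _) (hw _ _)) (fun z => mul_nonneg (hq _) (hw' _ _))
      (by
        rintro ⟨a, b⟩ hz
        rcases mul_eq_zero.mp hz with h0 | h0
        · simp [h0]
        · by_cases hqa : q a = 0
          · simp [hqa]
          · simp [hac a b hqa h0])
      (by rw [Fintype.sum_prod_type, Fintype.sum_prod_type]; exact hsum)
    rw [Fintype.sum_prod_type] at key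
    refine le_of_le_of_eq key (Finset.sum_congr rfl fun a _ => Finset.sum_congr rfl fun b _ => ?_)
    by_cases hz : q a * w a b = 0
    · simp [hz]
    · rw [if_neg hz, if_neg hz]
      have hqa : q a ≠ 0 := fun h => hz (by simp [h])
      rw [mul_div_mul_left _ _ hqa]
  · exact le_top

lemma relEnt_self {Z : Type} [Fintype Z] (p : Z → ℝ) : relEnt p p = 0 := by
  unfold relEnt
  rw [if_pos (fun z h => h)]
  have : ∀ z ∈ Finset.univ, (if p z = 0 then (0:ℝ) else p z * Real.log (p z / p z)) = 0 := by
    intro z _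
    by_cases hz : p z = 0
    · simp [hz]
    · rw [if_neg hz, div_self hz, Real.log_one, mul_zero]
  rw [Finset.sum_congr rfl this, Finset.sum_const_zero]
  rfl

lemma condRelEnt_self {A B : Type} [Fintype A] [Fintype B]
    (q : A → ℝ) (w : A → B → ℝ) : condRelEnt q w w = 0 := by
  unfold condRelEnt
  rw [if_pos (fun a b _ h => h)]
  have : ∀ a ∈ Finset.univ, (∑ b : B, if q a * w a b = 0 then (0:ℝ)
      else q a * w a b * Real.log (w a b / w a b)) = 0 := by
    intro a _
    refine Finset.sum_eq_zero fun b _ => ?_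
    by_cases hz : q a * w a b = 0
    · simp [hz]
    · have hw : w a b ≠ 0 := fun h => hz (by simp [h])
      rw [if_neg hz, div_self hw, Real.log_one, mul_zero]
  rw [Finset.sum_congr rfl this, Finset.sum_const_zero]
  rfl

namespace JointDist

variable {X Y : Type} [Fintype X] [Fintype Y] (μ ν : JointDist X Y)

lemma Qm_nonneg (x : X) : 0 ≤ μ.Qm x := Finset.sum_nonneg fun y _ => μ.nonneg x y
lemma Tm_nonneg (y : Y) : 0 ≤ μ.Tm y := Finset.sum_nonneg fun x _ => μ.nonneg x y
lemma Wc_nonneg (x : X) (y : Y) : 0 ≤ μ.Wc x y := by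
  unfold Wc; split
  · exact le_refl 0
  · exact div_nonneg (μ.nonneg x y) (μ.Qm_nonneg x)
lemma Vc_nonneg (y : Y) (x : X) : 0 ≤ μ.Vc y x := by
  unfold Vc; split
  · exact le_refl 0
  · exact div_nonneg (μ.nonneg x y) (μ.Tm_nonneg y)

lemma sum_Qm : ∑ x : X, μ.Qm x = 1 := μ.sum_one
lemma sum_Tm : ∑ y : Y, μ.Tm y = 1 := by
  rw [show ∑ y : Y, μ.Tm y = ∑ x : X, ∑ y : Y, μ.p x y from Finset.sum_comm, μ.sum_one]

lemma p_eq_zero_of_Qm {x : X} (h : μ.Qm x = 0) (y : Y) : μ.p x y = 0 :=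
  (Finset.sum_eq_zero_iff_of_nonneg (fun y _ => μ.nonneg x y)).mp h y (Finset.mem_univ y)
lemma p_eq_zero_of_Tm {y : Y} (h : μ.Tm y = 0) (x : X) : μ.p x y = 0 :=
  (Finset.sum_eq_zero_iff_of_nonneg (fun x _ => μ.nonneg x y)).mp h x (Finset.mem_univ x)

lemma Qm_mul_Wc (x : X) (y : Y) : μ.Qm x * μ.Wc x y = μ.p x y := by
  unfold Wc; split
  · rename_i h; rw [h, zero_mul, μ.p_eq_zero_of_Qm h]
  · rename_i h; field_simp
lemma Tm_mul_Vc (y : Y) (x : X) : μ.Tm y * μ.Vc y x = μ.p x y := by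
  unfold Vc; split
  · rename_i h; rw [h, zero_mul, μ.p_eq_zero_of_Tm h]
  · rename_i h; field_simp

lemma sum_Wc (x : X) : ∑ y : Y, μ.Wc x y = if μ.Qm x = 0 then 0 else 1 := by
  unfold Wc; split
  · simp
  · rename_i h
    rw [← Finset.sum_div]
    exact div_self h
lemma sum_Vc (y : Y) : ∑ x : X, μ.Vc y x = if μ.Tm y = 0 then 0 else 1 := by
  unfold Vc; split
  · simp
  · rename_i h
    rw [← Finset.sum_div]
    exact div_self h

lemma sum_Wc_le_one (x : X) : ∑ y : Y, μ.Wc x y ≤ 1 := by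
  rw [sum_Wc]; split <;> norm_num
lemma sum_Vc_le_one (y : Y) : ∑ x : X, μ.Vc y x ≤ 1 := by
  rw [sum_Vc]; split <;> norm_num

end JointDist

variable {X Y : Type} [Fintype X] [Fintype Y]

lemma sum_Qm_Wc (μ ν : JointDist X Y) :
    ∑ x : X, ∑ y : Y, μ.Qm x * ν.Wc x y ≤ ∑ x : X, ∑ y : Y, μ.Qm x * μ.Wc x y := by
  have h1 : ∑ x : X, ∑ y : Y, μ.Qm x * μ.Wc x y = 1 := by
    simp_rw [μ.Qm_mul_Wc]; exact μ.sum_one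
  rw [h1]
  calc ∑ x : X, ∑ y : Y, μ.Qm x * ν.Wc x y
      = ∑ x : X, μ.Qm x * ∑ y : Y, ν.Wc x y := by simp_rw [Finset.mul_sum]
    _ ≤ ∑ x : X, μ.Qm x * 1 := Finset.sum_le_sum fun x _ =>
        mul_le_mul_of_nonneg_left (ν.sum_Wc_le_one x) (μ.Qm_nonneg x)
    _ = 1 := by simp [μ.sum_Qm]

lemma sum_Tm_Vc (μ ν : JointDist X Y) :
    ∑ y : Y, ∑ x : X, μ.Tm y * ν.Vc y x ≤ ∑ y : Y, ∑ x : X, μ.Tm y * μ.Vc y x := by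
  have h1 : ∑ y : Y, ∑ x : X, μ.Tm y * μ.Vc y x = 1 := by
    simp_rw [μ.Tm_mul_Vc]
    rw [show ∑ y : Y, ∑ x : X, μ.p x y = ∑ x : X, ∑ y : Y, μ.p x y from Finset.sum_comm,
      μ.sum_one]
  rw [h1]
  calc ∑ y : Y, ∑ x : X, μ.Tm y * ν.Vc y x
      = ∑ y : Y, μ.Tm y * ∑ x : X, ν.Vc y x := by simp_rw [Finset.mul_sum]
    _ ≤ ∑ y : Y, μ.Tm y * 1 := Finset.sum_le_sum fun y _ =>
        mul_le_mul_of_nonneg_left (ν.sum_Vc_le_one y) (μ.Tm_nonneg y)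
    _ = 1 := by simp [μ.sum_Tm]

lemma Dt_nonneg (t : Fin 4 → ℝ) (ht : ∀ i, 0 ≤ t i) (μ ν : JointDist X Y) :
    0 ≤ Dt t μ ν := by
  have h0 : 0 ≤ relEnt μ.Qm ν.Qm :=
    relEnt_nonneg' _ _ μ.Qm_nonneg ν.Qm_nonneg (by rw [μ.sum_Qm, ν.sum_Qm])
  have h1 : 0 ≤ condRelEnt μ.Qm μ.Wc ν.Wc :=
    condRelEnt_nonneg' _ _ _ μ.Qm_nonneg μ.Wc_nonneg ν.Wc_nonneg (sum_Qm_Wc μ ν)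
  have h2 : 0 ≤ relEnt μ.Tm ν.Tm :=
    relEnt_nonneg' _ _ μ.Tm_nonneg ν.Tm_nonneg (by rw [μ.sum_Tm, ν.sum_Tm])
  have h3 : 0 ≤ condRelEnt μ.Tm μ.Vc ν.Vc :=
    condRelEnt_nonneg' _ _ _ μ.Tm_nonneg μ.Vc_nonneg ν.Vc_nonneg (sum_Tm_Vc μ ν)
  have c : ∀ i, (0:EReal) ≤ (t i : EReal) := fun i => EReal.coe_nonneg.mpr (ht i)
  exact add_nonneg (add_nonneg (add_nonneg (mul_nonneg (c 0) h0) (mul_nonneg (c 1) h1))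
    (mul_nonneg (c 2) h2)) (mul_nonneg (c 3) h3)

lemma Dt_self (t : Fin 4 → ℝ) (μ : JointDist X Y) : Dt t μ μ = 0 := by
  unfold Dt
  rw [relEnt_self, condRelEnt_self, relEnt_self, condRelEnt_self]
  simp

lemma F2_eq (P : X → Y → ℝ) (R : ℝ) (μ : JointDist X Y) :
    F2 P R μ = condDivP P μ + ((R - mutInfo μ : ℝ) : EReal) := by
  unfold F2
  rw [sub_eq_add_neg, add_assoc]
  congr 1
  rw [← EReal.coe_neg, ← EReal.coe_add]
  congr 1
  ring

lemma Fr_lower (P : X → Y → ℝ) (t : Fin 4 → ℝ) (ht : ∀ i, 0 ≤ t i) (R : ℝ)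
    (μ ν : JointDist X Y) :
    condDivP P μ + ((max 0 (R - mutInfo μ) : ℝ) : EReal) ≤ Fr P t R μ ν := by
  rcases le_total (R - mutInfo μ) 0 with h | h
  · rw [max_eq_left h]
    calc condDivP P μ + ((0:ℝ) : EReal) = condDivP P μ + 0 := by norm_num
      _ ≤ condDivP P μ + Dt t μ ν := add_le_add_right (Dt_nonneg t ht μ ν) _
      _ ≤ Fr P t R μ ν := le_max_left _ _
  · rw [max_eq_right h]
    rw [← F2_eq]
    exact le_max_right _ _

lemma Fr_self (P : X → Y → ℝ) (t : Fin 4 → ℝ) (R : ℝ) (μ : JointDist X Y) :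
    Fr P t R μ μ = condDivP P μ + ((max 0 (R - mutInfo μ) : ℝ) : EReal) := by
  unfold Fr F1
  rw [Dt_self, add_zero, F2_eq]
  rcases le_total (R - mutInfo μ) 0 with h | h
  · rw [max_eq_left h, max_eq_left]
    · norm_num
    · calc condDivP P μ + ((R - mutInfo μ : ℝ) : EReal)
          ≤ condDivP P μ + ((0:ℝ) : EReal) := add_le_add_right (by exact_mod_cast h) _
        _ = condDivP P μ := by norm_num
  · rw [max_eq_right h, max_eq_right]
    calc condDivP P μ = condDivP P μ + ((0:ℝ) : EReal) := by norm_num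
      _ ≤ condDivP P μ + ((R - mutInfo μ : ℝ) : EReal) := add_le_add_right (by exact_mod_cast h) _

end Aux

/-- Minimizing `E_c^t(Q̃W̃, R, α)` over all reference distributions `Q̃W̃`
recovers the correct-decoding exponent
`min { D(W‖P|Q) + |R − I(Q,W)|⁺ : E_Q[f] ≤ α }`. -/
theorem stmt4 {X Y : Type} [Fintype X] [Fintype Y]
    (P : X → Y → ℝ) (hP : ∀ x y, 0 ≤ P x y) (hPsum : ∀ x, ∑ y : Y, P x y = 1)
    (t : Fin 4 → ℝ) (ht : ∀ i, 0 ≤ t i)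
    (f : X → ℝ) (R α : ℝ) (hR : 0 ≤ R) (hα : ∃ x, f x ≤ α) :
    sInf (Set.range fun ν : JointDist X Y => Ec P t f R α ν)
      = sInf ((fun μ => condDivP P μ + ((max 0 (R - mutInfo μ) : ℝ) : EReal)) ''
          {μ : JointDist X Y | expCost f μ ≤ α}) := by
  apply le_antisymm
  · apply le_sInf
    rintro b ⟨μ, hμ, rfl⟩
    calc sInf (Set.range fun ν : JointDist X Y => Ec P t f R α ν)
        ≤ Ec P t f R α μ := sInf_le ⟨μ, rfl⟩
      _ ≤ Fr P t R μ μ := sInf_le ⟨μ, hμ, rfl⟩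
      _ = condDivP P μ + ((max 0 (R - mutInfo μ) : ℝ) : EReal) := Fr_self P t R μ
  · apply le_sInf
    rintro b ⟨ν, rfl⟩
    apply le_sInf
    rintro b ⟨μ, hμ, rfl⟩
    calc sInf ((fun μ => condDivP P μ + ((max 0 (R - mutInfo μ) : ℝ) : EReal)) ''
          {μ : JointDist X Y | expCost f μ ≤ α})
        ≤ condDivP P μ + ((max 0 (R - mutInfo μ) : ℝ) : EReal) := sInf_le ⟨μ, hμ, rfl⟩
      _ ≤ Fr P t R μ ν := Fr_lower P t ht R μ ν
end

section
/- (Tightness of the supporting plane.) For any 0 ≤ ρ < 1 and η ≥ 0 such that E₀^t(ρ, η, Q̃W̃) is finite, there exist R ≥ 0 and α ≥ min_x f(x) such that E_c^t(Q̃W̃, R, α) = E₀^t(ρ, η, Q̃W̃) + ρR − ηα. -/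
open scoped BigOperators
open Filter Topology

variable {X Y : Type}

namespace PlaneAux

/-- pointwise KL term, `EReal`-valued. -/
noncomputable def kl (a b : ℝ) : EReal :=
  if a ≤ 0 then 0 else if b ≤ 0 then ⊤ else ((a * Real.log (a / b) : ℝ) : EReal)

lemma kl_ne_bot (a b : ℝ) : kl a b ≠ ⊥ := by
  unfold kl; split_ifs <;> simp [← EReal.coe_mul]

lemma kl_of_nonpos {a : ℝ} (h : a ≤ 0) (b : ℝ) : kl a b = 0 := by simp [kl, h]

lemma kl_top {a b : ℝ} (ha : 0 < a) (hb : b ≤ 0) : kl a b = ⊤ := by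
  simp [kl, not_le.mpr ha, hb]

lemma kl_pos_pos {a b : ℝ} (ha : 0 < a) (hb : 0 < b) :
    kl a b = ((a * Real.log (a / b) : ℝ) : EReal) := by
  simp [kl, not_le.mpr ha, not_le.mpr hb]

lemma kl_lsc : LowerSemicontinuous (fun p : ℝ × ℝ => kl p.1 p.2) := by
  intro p y hy
  induction y using EReal.rec with
  | top => exact absurd hy (not_top_lt)
  | bot => exact Filter.Eventually.of_forall fun q => (kl_ne_bot _ _).bot_lt
  | coe yr =>
    obtain ⟨a₀, b₀⟩ := p
    change (yr : EReal) < kl a₀ b₀ at hy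
    rcases lt_trichotomy a₀ 0 with ha | ha | ha
    · -- a₀ < 0 : kl = 0 on a neighborhood
      rw [kl_of_nonpos ha.le] at hy
      have hev : ∀ᶠ q : ℝ × ℝ in 𝓝 (a₀, b₀), q.1 < 0 :=
        (isOpen_lt continuous_fst continuous_const).mem_nhds (by simpa using ha)
      filter_upwards [hev] with q hq
      rwa [kl_of_nonpos hq.le]
    · -- a₀ = 0
      rw [kl_of_nonpos ha.le] at hy
      have hyr : yr < 0 := by exact_mod_cast hy
      rcases le_or_gt b₀ 0 with hb | hb
      · -- b₀ ≤ 0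
        have hcont : ContinuousAt (fun q : ℝ × ℝ => q.1 * Real.log q.1) (a₀, b₀) :=
          (Real.continuous_mul_log.comp continuous_fst).continuousAt
        have h1 : ∀ᶠ q : ℝ × ℝ in 𝓝 (a₀, b₀), yr < q.1 * Real.log q.1 := by
          have := hcont.tendsto
          refine this.eventually_const_lt ?_
          simpa [ha] using hyr
        have h2 : ∀ᶠ q : ℝ × ℝ in 𝓝 (a₀, b₀), q.2 < 1 :=
          (isOpen_lt continuous_snd continuous_const).mem_nhds (by simpa using hb.trans_lt one_pos)
        filter_upwards [h1, h2] with q hq1 hq2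
        rcases le_or_gt q.1 0 with h | h
        · rw [kl_of_nonpos h]; exact_mod_cast hyr
        rcases le_or_gt q.2 0 with h' | h'
        · rw [kl_top h h']; exact EReal.coe_lt_top yr
        · rw [kl_pos_pos h h']
          have hlog : Real.log q.2 ≤ 0 := Real.log_nonpos h'.le hq2.le
          have : q.1 * Real.log q.1 ≤ q.1 * Real.log (q.1 / q.2) := by
            rw [Real.log_div h.ne' h'.ne', mul_sub]
            nlinarith [mul_nonneg h.le (neg_nonneg.mpr hlog)]
          exact_mod_cast hq1.trans_le this
      · -- b₀ > 0
        have hcont : ContinuousAt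
            (fun q : ℝ × ℝ => q.1 * Real.log q.1 - q.1 * Real.log q.2) (a₀, b₀) := by
          refine ContinuousAt.sub ?_ ?_
          · exact (Real.continuous_mul_log.comp continuous_fst).continuousAt
          · exact continuous_fst.continuousAt.mul
              (continuous_snd.continuousAt.log hb.ne')
        have hval : a₀ * Real.log a₀ - a₀ * Real.log b₀ = 0 := by simp [ha]
        have h1 : ∀ᶠ q : ℝ × ℝ in 𝓝 (a₀, b₀),
            yr < q.1 * Real.log q.1 - q.1 * Real.log q.2 := by
          refine hcont.tendsto.eventually_const_lt ?_
          rw [hval]; exact hyr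
        have h2 : ∀ᶠ q : ℝ × ℝ in 𝓝 (a₀, b₀), 0 < q.2 :=
          (isOpen_lt continuous_const continuous_snd).mem_nhds (by simpa using hb)
        filter_upwards [h1, h2] with q hq1 hq2
        rcases le_or_gt q.1 0 with h | h
        · rw [kl_of_nonpos h]; exact_mod_cast hyr
        · rw [kl_pos_pos h hq2]
          have : q.1 * Real.log (q.1 / q.2) = q.1 * Real.log q.1 - q.1 * Real.log q.2 := by
            rw [Real.log_div h.ne' hq2.ne', mul_sub]
          rw [this]; exact_mod_cast hq1
    · -- a₀ > 0
      rcases le_or_gt b₀ 0 with hb | hb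
      · -- kl = ⊤ here; show eventually large
        set c : ℝ := (2 / a₀) * (|yr| + 1) with hc
        have hcpos : 0 < c := by positivity
        set δ : ℝ := (a₀ / 2) * Real.exp (-c) with hδdef
        have hδpos : 0 < δ := by positivity
        have h1 : ∀ᶠ q : ℝ × ℝ in 𝓝 (a₀, b₀), a₀ / 2 < q.1 :=
          (isOpen_lt continuous_const continuous_fst).mem_nhds (by simp; linarith)
        have h2 : ∀ᶠ q : ℝ × ℝ in 𝓝 (a₀, b₀), q.2 < δ :=
          (isOpen_lt continuous_snd continuous_const).mem_nhds
            (by simp; exact hb.trans_lt hδpos)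
        filter_upwards [h1, h2] with q hq1 hq2
        have hq1' : 0 < q.1 := by linarith
        rcases le_or_gt q.2 0 with h' | h'
        · rw [kl_top hq1' h']; exact EReal.coe_lt_top yr
        · rw [kl_pos_pos hq1' h']
          have hratio : (a₀ / 2) / δ < q.1 / q.2 := by
            apply div_lt_div₀ (by linarith) hq2.le (by positivity) h'
          have hratioval : (a₀ / 2) / δ = Real.exp c := by
            rw [hδdef]; field_simp [Real.exp_ne_zero, Real.exp_neg]; rw [← Real.exp_add, neg_add_cancel, Real.exp_zero]
          have hlog : c < Real.log (q.1 / q.2) := by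
            rw [← Real.log_exp c, ← hratioval]
            exact Real.log_lt_log (by rw [hratioval]; positivity) hratio
          have : yr < q.1 * Real.log (q.1 / q.2) := by
            have h3 : (a₀ / 2) * c < q.1 * Real.log (q.1 / q.2) := by
              apply mul_lt_mul' hq1.le hlog hcpos.le hq1'
            have h4 : (a₀ / 2) * c = |yr| + 1 := by
              rw [hc]; field_simp
            nlinarith [abs_nonneg yr, le_abs_self yr]
          exact_mod_cast this
      · -- a₀ > 0, b₀ > 0 : continuity
        rw [kl_pos_pos ha hb] at hy
        have hyr : yr < a₀ * Real.log (a₀ / b₀) := by exact_mod_cast hy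
        have hcont : ContinuousAt (fun q : ℝ × ℝ => q.1 * Real.log (q.1 / q.2)) (a₀, b₀) := by
          refine continuous_fst.continuousAt.mul ?_
          exact (Real.continuousAt_log (by positivity)).comp
            (continuous_fst.continuousAt.div continuous_snd.continuousAt hb.ne')
        have h1 : ∀ᶠ q : ℝ × ℝ in 𝓝 (a₀, b₀), yr < q.1 * Real.log (q.1 / q.2) :=
          hcont.tendsto.eventually_const_lt hyr
        have h2 : ∀ᶠ q : ℝ × ℝ in 𝓝 (a₀, b₀), 0 < q.1 :=
          (isOpen_lt continuous_const continuous_fst).mem_nhds (by simpa using ha)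
        have h3 : ∀ᶠ q : ℝ × ℝ in 𝓝 (a₀, b₀), 0 < q.2 :=
          (isOpen_lt continuous_const continuous_snd).mem_nhds (by simpa using hb)
        filter_upwards [h1, h2, h3] with q hq1 hq2 hq3
        rw [kl_pos_pos hq2 hq3]
        exact_mod_cast hq1

end PlaneAux

namespace PlaneAux

lemma ereal_sum_ne_bot {ι : Type*} (s : Finset ι) (F : ι → EReal) (h : ∀ i, F i ≠ ⊥) :
    ∑ i ∈ s, F i ≠ ⊥ := by
  classical
  induction s using Finset.induction_on with
  | empty => simp
  | @insert a s' hx ih =>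
      rw [Finset.sum_insert hx]
      simp [EReal.add_eq_bot_iff, h a, ih]

lemma ereal_sum_eq_top {ι : Type*} (s : Finset ι) (F : ι → EReal) (h : ∀ i, F i ≠ ⊥)
    {j : ι} (hj : j ∈ s) (htop : F j = ⊤) : ∑ i ∈ s, F i = ⊤ := by
  classical
  rw [← Finset.add_sum_erase s F hj, htop]
  exact EReal.top_add_of_ne_bot (ereal_sum_ne_bot _ _ h)

lemma ereal_sum_coe {ι : Type*} (s : Finset ι) (r : ι → ℝ) :
    ∑ i ∈ s, ((r i : ℝ) : EReal) = ((∑ i ∈ s, r i : ℝ) : EReal) := by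
  classical
  induction s using Finset.induction_on with
  | empty => simp
  | @insert a s' hx ih =>
      rw [Finset.sum_insert hx, Finset.sum_insert hx, ih, ← EReal.coe_add]

lemma lsc_add {α : Type*} [TopologicalSpace α] {f g : α → EReal}
    (hf : LowerSemicontinuous f) (hg : LowerSemicontinuous g)
    (hfb : ∀ x, f x ≠ ⊥) (hgb : ∀ x, g x ≠ ⊥) :
    LowerSemicontinuous fun x => f x + g x :=
  hf.add' hg fun x => EReal.continuousAt_add (Or.inr (hgb x)) (Or.inl (hfb x))

lemma lsc_sum {α ι : Type*} [TopologicalSpace α] (s : Finset ι) (F : ι → α → EReal)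
    (h : ∀ i, LowerSemicontinuous (F i)) (hb : ∀ i x, F i x ≠ ⊥) :
    LowerSemicontinuous fun x => ∑ i ∈ s, F i x := by
  classical
  induction s using Finset.induction_on with
  | empty => simpa using lowerSemicontinuous_const
  | @insert a s' hx ih =>
      simp only [Finset.sum_insert hx]
      exact lsc_add (h a) ih (hb a) fun x => ereal_sum_ne_bot _ _ fun i => hb i x

/-- A lower semicontinuous `EReal`-valued function attains its minimum on a nonempty
compact set, provided the infimum is a real number. -/
lemma exists_min_on_compact {E : Type*} [MetricSpace E] {K : Set E} (hK : IsCompact K)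
    (φ : E → EReal) (hφ : LowerSemicontinuous φ) {mr : ℝ}
    (hm : sInf (φ '' K) = (mr : EReal)) :
    ∃ g ∈ K, φ g = (mr : EReal) := by
  have hsel : ∀ n : ℕ, ∃ x ∈ K, φ x < ((mr + 1 / (n + 1) : ℝ) : EReal) := by
    intro n
    have hlt : sInf (φ '' K) < ((mr + 1 / (n + 1) : ℝ) : EReal) := by
      rw [hm]
      apply EReal.coe_lt_coe_iff.mpr
      have : (0:ℝ) < 1 / ((n:ℝ) + 1) := by positivity
      linarith
    obtain ⟨b, hb, hblt⟩ := sInf_lt_iff.mp hlt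
    obtain ⟨x, hxK, rfl⟩ := hb
    exact ⟨x, hxK, hblt⟩
  choose u hu1 hu2 using hsel
  obtain ⟨g, hgK, ψ, hψ, htend⟩ := hK.tendsto_subseq hu1
  refine ⟨g, hgK, le_antisymm ?_ ?_⟩
  · by_contra h
    push_neg at h
    obtain ⟨y, hy1, hy2⟩ := exists_between h
    have hev1 : ∀ᶠ n in atTop, y < φ (u (ψ n)) := htend.eventually (hφ g y hy2)
    have htend2 : Tendsto (fun n => ((mr + 1 / (ψ n + 1) : ℝ) : EReal)) atTop (𝓝 (mr : EReal)) := by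
      rw [show (𝓝 ((mr : ℝ) : EReal)) = 𝓝 (((mr + 0 : ℝ)) : EReal) by norm_num]
      apply EReal.tendsto_coe.mpr
      apply Tendsto.const_add
      have h0 : Tendsto (fun n : ℕ => 1 / ((n : ℝ) + 1)) atTop (𝓝 0) :=
        tendsto_one_div_add_atTop_nhds_zero_nat
      exact h0.comp (hψ.tendsto_atTop)
    have hev2 : ∀ᶠ n in atTop, ((mr + 1 / (ψ n + 1) : ℝ) : EReal) < y :=
      htend2.eventually_lt_const hy1
    obtain ⟨n, h1, h2⟩ := (hev1.and hev2).exists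
    exact absurd ((h1.trans (hu2 (ψ n))).trans h2) (lt_irrefl y)
  · rw [← hm]; exact sInf_le ⟨g, hgK, rfl⟩

end PlaneAux

namespace PlaneAux

variable {Z : Type} [Fintype Z]

lemma relEnt_ne_bot (p q : Z → ℝ) : relEnt p q ≠ ⊥ := by
  unfold relEnt; split_ifs <;> simp

lemma klSum_eq_relEnt (p q : Z → ℝ) (hp : ∀ z, 0 ≤ p z) (hq : ∀ z, 0 ≤ q z) :
    ∑ z : Z, kl (p z) (q z) = relEnt p q := by
  classical
  unfold relEnt
  split_ifs with hC
  · rw [← ereal_sum_coe]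
    apply Finset.sum_congr rfl
    intro z _
    by_cases hz : p z = 0
    · rw [kl_of_nonpos (le_of_eq hz)]; simp [hz]
    · have hpz : 0 < p z := (hp z).lt_of_ne (Ne.symm hz)
      have hqz : 0 < q z := (hq z).lt_of_ne (fun h => hz (hC z h.symm))
      rw [kl_pos_pos hpz hqz]; simp [hz]
  · push_neg at hC
    obtain ⟨z, hqz, hpz⟩ := hC
    exact ereal_sum_eq_top _ _ (fun i => kl_ne_bot _ _) (Finset.mem_univ z)
      (kl_top ((hp z).lt_of_ne (Ne.symm hpz)) hqz.le)

lemma relEnt_smul {c : ℝ} (hc : 0 < c) (p q : Z → ℝ) :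
    relEnt (fun z => c * p z) (fun z => c * q z) = (c : EReal) * relEnt p q := by
  unfold relEnt
  have hcond : (∀ z, c * q z = 0 → c * p z = 0) ↔ (∀ z, q z = 0 → p z = 0) := by
    constructor
    · intro h z hz
      have := h z (by rw [hz, mul_zero])
      rcases mul_eq_zero.mp this with h' | h'
      · exact absurd h' hc.ne'
      · exact h'
    · intro h z hz
      rcases mul_eq_zero.mp hz with h' | h'
      · exact absurd h' hc.ne'
      · rw [h z h', mul_zero]
  split_ifs with h1 h2 h2
  · rw [← EReal.coe_mul]
    norm_cast
    rw [Finset.mul_sum]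
    apply Finset.sum_congr rfl
    intro z _
    by_cases hz : p z = 0
    · simp [hz]
    · have hne : c * p z ≠ 0 := mul_ne_zero hc.ne' hz
      simp only [hz, hne, if_neg, if_false]
      rw [mul_div_mul_left _ _ hc.ne']; ring
  · exact absurd (hcond.mp h1) h2
  · exact absurd (hcond.mpr h2) h1
  · rw [EReal.coe_mul_top_of_pos hc]

lemma klSum_scaled (c : ℝ) (hc : 0 ≤ c) (p q : Z → ℝ) (hp : ∀ z, 0 ≤ p z)
    (hq : ∀ z, 0 ≤ q z) :
    ∑ z : Z, kl (c * p z) (c * q z) = (c : EReal) * relEnt p q := by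
  rcases hc.eq_or_lt with rfl | hc'
  · simp [kl_of_nonpos]
  · rw [klSum_eq_relEnt _ _ (fun z => mul_nonneg hc'.le (hp z))
      (fun z => mul_nonneg hc'.le (hq z)), relEnt_smul hc']

lemma relEnt_nonneg (p q : Z → ℝ) (hp : ∀ z, 0 ≤ p z) (hq : ∀ z, 0 ≤ q z)
    (hps : 1 ≤ ∑ z : Z, p z) (hqs : ∑ z : Z, q z ≤ 1) : 0 ≤ relEnt p q := by
  unfold relEnt
  split_ifs with hC
  · apply EReal.coe_nonneg.mpr
    have key : ∀ z, p z - q z ≤ (if p z = 0 then 0 else p z * Real.log (p z / q z)) := by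
      intro z
      by_cases hz : p z = 0
      · simp [hz]; linarith [hq z]
      · have hpz : 0 < p z := (hp z).lt_of_ne (Ne.symm hz)
        have hqz : 0 < q z := (hq z).lt_of_ne fun h => hz (hC z h.symm)
        simp only [hz, if_neg, if_false]
        have hl : Real.log (q z / p z) ≤ q z / p z - 1 :=
          Real.log_le_sub_one_of_pos (by positivity)
        have hinv : Real.log (p z / q z) = - Real.log (q z / p z) := by
          rw [← Real.log_inv]; congr 1; field_simp
        have hf : p z * (q z / p z) = q z := by field_simp
        have h2 := mul_le_mul_of_nonneg_left hl hpz.le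
        rw [mul_sub, hf] at h2
        rw [hinv]; nlinarith
    calc (0:ℝ) ≤ ∑ z : Z, (p z - q z) := by
              rw [Finset.sum_sub_distrib]; linarith
    _ ≤ _ := Finset.sum_le_sum fun z _ => key z
  · exact le_top

variable {A B : Type} [Fintype A] [Fintype B]

lemma condRelEnt_ne_bot (q : A → ℝ) (w w' : A → B → ℝ) : condRelEnt q w w' ≠ ⊥ := by
  unfold condRelEnt; split_ifs <;> simp

lemma condRelEnt_eq_relEnt (m : A → B → ℝ) (hm : ∀ a b, 0 ≤ m a b) (w' : A → B → ℝ) :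
    condRelEnt (fun a => ∑ b, m a b)
      (fun a b => if (∑ b', m a b') = 0 then 0 else m a b / (∑ b', m a b')) w'
    = relEnt (fun z : A × B => m z.1 z.2)
        (fun z : A × B => (∑ b', m z.1 b') * w' z.1 z.2) := by
  classical
  have hQ0 : ∀ a b, (∑ b', m a b') = 0 → m a b = 0 := by
    intro a b h
    have := (Finset.sum_eq_zero_iff_of_nonneg (fun b' _ => hm a b')).mp h
    exact this b (Finset.mem_univ b)
  have hiff : (∀ a b, (∑ b', m a b') ≠ 0 → w' a b = 0 →
        (if (∑ b', m a b') = 0 then 0 else m a b / (∑ b', m a b')) = 0) ↔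
      (∀ z : A × B, (∑ b', m z.1 b') * w' z.1 z.2 = 0 → m z.1 z.2 = 0) := by
    constructor
    · rintro h ⟨a, b⟩ hz
      rcases mul_eq_zero.mp hz with h' | h'
      · exact hQ0 a b h'
      · by_cases hQ : (∑ b', m a b') = 0
        · exact hQ0 a b hQ
        · have := h a b hQ h'
          rw [if_neg hQ] at this
          exact (div_eq_zero_iff.mp this).resolve_right hQ
    · intro h a b hQ hw
      rw [if_neg hQ]
      rw [h (a, b) (by rw [hw, mul_zero])]
      simp
  unfold condRelEnt relEnt
  by_cases h : (∀ z : A × B, (∑ b', m z.1 b') * w' z.1 z.2 = 0 → m z.1 z.2 = 0)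
  · rw [if_pos (hiff.mpr h), if_pos h]
    norm_cast
    rw [Fintype.sum_prod_type]
    apply Finset.sum_congr rfl
    intro a _
    apply Finset.sum_congr rfl
    intro b _
    dsimp only
    by_cases hQ : (∑ b', m a b') = 0
    · simp [hQ, hQ0 a b hQ]
    · simp only [if_neg hQ]
      rw [mul_div_cancel₀ _ hQ]
      by_cases hmz : m a b = 0
      · simp [hmz]
      · rw [if_neg hmz, if_neg hmz, div_div]
  · rw [if_neg (fun h1 => h (hiff.mp h1)), if_neg h]

end PlaneAux

namespace PlaneAux

variable {X Y : Type} [Fintype X] [Fintype Y]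

lemma sub_le_mul_log {a b : ℝ} (ha : 0 < a) (hb : 0 < b) :
    a - b ≤ a * Real.log (a / b) := by
  have hl : Real.log (b / a) ≤ b / a - 1 := Real.log_le_sub_one_of_pos (by positivity)
  have hinv : Real.log (a / b) = - Real.log (b / a) := by
    rw [← Real.log_inv]; congr 1; field_simp
  have hf : a * (b / a) = b := by field_simp
  have h2 := mul_le_mul_of_nonneg_left hl ha.le
  rw [mul_sub, hf] at h2
  rw [hinv]; nlinarith

lemma Qm_nonneg (μ : JointDist X Y) (x : X) : 0 ≤ μ.Qm x :=
  Finset.sum_nonneg fun y _ => μ.nonneg x y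

lemma Tm_nonneg (μ : JointDist X Y) (y : Y) : 0 ≤ μ.Tm y :=
  Finset.sum_nonneg fun x _ => μ.nonneg x y

lemma sum_Qm (μ : JointDist X Y) : ∑ x, μ.Qm x = 1 := μ.sum_one

lemma sum_Tm (μ : JointDist X Y) : ∑ y, μ.Tm y = 1 := by
  rw [show ∑ y, μ.Tm y = ∑ y, ∑ x, μ.p x y from rfl, Finset.sum_comm]
  exact μ.sum_one

lemma p_le_Qm (μ : JointDist X Y) (x : X) (y : Y) : μ.p x y ≤ μ.Qm x :=
  Finset.single_le_sum (fun y' _ => μ.nonneg x y') (Finset.mem_univ y)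

lemma p_le_Tm (μ : JointDist X Y) (x : X) (y : Y) : μ.p x y ≤ μ.Tm y :=
  Finset.single_le_sum (fun x' _ => μ.nonneg x' y) (Finset.mem_univ x)

lemma Wc_nonneg (μ : JointDist X Y) (x : X) (y : Y) : 0 ≤ μ.Wc x y := by
  unfold JointDist.Wc; split_ifs with h
  · exact le_refl 0
  · exact div_nonneg (μ.nonneg x y) (Qm_nonneg μ x)

lemma Vc_nonneg (μ : JointDist X Y) (y : Y) (x : X) : 0 ≤ μ.Vc y x := by
  unfold JointDist.Vc; split_ifs with h
  · exact le_refl 0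
  · exact div_nonneg (μ.nonneg x y) (Tm_nonneg μ y)

lemma sum_Wc_le_one (μ : JointDist X Y) (x : X) : ∑ y, μ.Wc x y ≤ 1 := by
  unfold JointDist.Wc
  by_cases h : μ.Qm x = 0
  · simp [h]
  · simp only [h, if_false]
    rw [← Finset.sum_div, div_le_one ((Qm_nonneg μ x).lt_of_ne (Ne.symm h))]
    exact le_refl _

lemma sum_Vc_le_one (μ : JointDist X Y) (y : Y) : ∑ x, μ.Vc y x ≤ 1 := by
  unfold JointDist.Vc
  by_cases h : μ.Tm y = 0
  · simp [h]
  · simp only [h, if_false]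
    rw [← Finset.sum_div, div_le_one ((Tm_nonneg μ y).lt_of_ne (Ne.symm h))]
    exact le_refl _

lemma condW_repr (μ : JointDist X Y) (w' : X → Y → ℝ) :
    condRelEnt μ.Qm μ.Wc w'
      = relEnt (fun z : X × Y => μ.p z.1 z.2) (fun z => μ.Qm z.1 * w' z.1 z.2) :=
  condRelEnt_eq_relEnt μ.p μ.nonneg w'

lemma condV_repr (μ : JointDist X Y) (v' : Y → X → ℝ) :
    condRelEnt μ.Tm μ.Vc v'
      = relEnt (fun z : Y × X => μ.p z.2 z.1) (fun z => μ.Tm z.1 * v' z.1 z.2) :=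
  condRelEnt_eq_relEnt (fun y x => μ.p x y) (fun y x => μ.nonneg x y) v'

lemma sum_joint (μ : JointDist X Y) : (1:ℝ) ≤ ∑ z : X × Y, μ.p z.1 z.2 := by
  rw [Fintype.sum_prod_type]; rw [μ.sum_one]

lemma sum_joint' (μ : JointDist X Y) : (1:ℝ) ≤ ∑ z : Y × X, μ.p z.2 z.1 := by
  rw [Fintype.sum_prod_type]
  rw [show ∑ y, ∑ x, μ.p x y = ∑ x, ∑ y, μ.p x y from Finset.sum_comm]
  rw [μ.sum_one]

lemma relEnt_Qm_nonneg (μ ν : JointDist X Y) : 0 ≤ relEnt μ.Qm ν.Qm :=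
  relEnt_nonneg _ _ (Qm_nonneg μ) (Qm_nonneg ν) (sum_Qm μ).ge (sum_Qm ν).le

lemma relEnt_Tm_nonneg (μ ν : JointDist X Y) : 0 ≤ relEnt μ.Tm ν.Tm :=
  relEnt_nonneg _ _ (Tm_nonneg μ) (Tm_nonneg ν) (sum_Tm μ).ge (sum_Tm ν).le

lemma sum_QmW_le_one (μ : JointDist X Y) (w' : X → Y → ℝ) (hw : ∀ x, ∑ y, w' x y ≤ 1)
    (hw0 : ∀ x y, 0 ≤ w' x y) : ∑ z : X × Y, μ.Qm z.1 * w' z.1 z.2 ≤ 1 := by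
  rw [Fintype.sum_prod_type]
  calc ∑ x, ∑ y, μ.Qm x * w' x y = ∑ x, μ.Qm x * ∑ y, w' x y := by
        apply Finset.sum_congr rfl; intro x _; rw [Finset.mul_sum]
  _ ≤ ∑ x, μ.Qm x * 1 := Finset.sum_le_sum fun x _ =>
        mul_le_mul_of_nonneg_left (hw x) (Qm_nonneg μ x)
  _ = 1 := by simp [sum_Qm μ]

lemma sum_TmV_le_one (μ : JointDist X Y) (v' : Y → X → ℝ) (hv : ∀ y, ∑ x, v' y x ≤ 1)
    (hv0 : ∀ y x, 0 ≤ v' y x) : ∑ z : Y × X, μ.Tm z.1 * v' z.1 z.2 ≤ 1 := by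
  rw [Fintype.sum_prod_type]
  calc ∑ y, ∑ x, μ.Tm y * v' y x = ∑ y, μ.Tm y * ∑ x, v' y x := by
        apply Finset.sum_congr rfl; intro y _; rw [Finset.mul_sum]
  _ ≤ ∑ y, μ.Tm y * 1 := Finset.sum_le_sum fun y _ =>
        mul_le_mul_of_nonneg_left (hv y) (Tm_nonneg μ y)
  _ = 1 := by simp [sum_Tm μ]

lemma condW_nonneg (μ ν : JointDist X Y) : 0 ≤ condRelEnt μ.Qm μ.Wc ν.Wc := by
  rw [condW_repr]
  exact relEnt_nonneg _ _ (fun z => μ.nonneg z.1 z.2)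
    (fun z => mul_nonneg (Qm_nonneg μ z.1) (Wc_nonneg ν z.1 z.2)) (sum_joint μ)
    (sum_QmW_le_one μ ν.Wc (sum_Wc_le_one ν) (Wc_nonneg ν))

lemma condV_nonneg (μ ν : JointDist X Y) : 0 ≤ condRelEnt μ.Tm μ.Vc ν.Vc := by
  rw [condV_repr]
  exact relEnt_nonneg _ _ (fun z => μ.nonneg z.2 z.1)
    (fun z => mul_nonneg (Tm_nonneg μ z.1) (Vc_nonneg ν z.1 z.2)) (sum_joint' μ)
    (sum_TmV_le_one μ ν.Vc (sum_Vc_le_one ν) (Vc_nonneg ν))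

lemma Dt_nonneg (t : Fin 4 → ℝ) (ht : ∀ i, 0 ≤ t i) (μ ν : JointDist X Y) :
    0 ≤ Dt t μ ν := by
  unfold Dt
  have h0 : ∀ i, (0:EReal) ≤ (t i : EReal) := fun i => EReal.coe_nonneg.mpr (ht i)
  refine add_nonneg (add_nonneg (add_nonneg ?_ ?_) ?_) ?_
  · exact mul_nonneg (h0 0) (relEnt_Qm_nonneg μ ν)
  · exact mul_nonneg (h0 1) (condW_nonneg μ ν)
  · exact mul_nonneg (h0 2) (relEnt_Tm_nonneg μ ν)
  · exact mul_nonneg (h0 3) (condV_nonneg μ ν)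

lemma ne_bot_of_nonneg {v : EReal} (h : 0 ≤ v) : v ≠ ⊥ := by
  intro hb; rw [hb] at h; exact absurd h (by simp)

lemma condDivP_ne_bot (P : X → Y → ℝ) (μ : JointDist X Y) : condDivP P μ ≠ ⊥ :=
  condRelEnt_ne_bot _ _ _

lemma condDivP_cases (P : X → Y → ℝ) (μ : JointDist X Y) :
    condDivP P μ = ⊤ ∨ ∃ d : ℝ, condDivP P μ = (d : EReal) := by
  unfold condDivP condRelEnt
  split_ifs
  · exact Or.inr ⟨_, rfl⟩
  · exact Or.inl rfl

lemma mutInfo_nonneg (μ : JointDist X Y) : 0 ≤ mutInfo μ := by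
  unfold mutInfo
  have key : ∀ x y, μ.p x y - μ.Qm x * μ.Tm y ≤
      (if μ.p x y = 0 then 0
        else μ.p x y * Real.log (μ.p x y / (μ.Qm x * μ.Tm y))) := by
    intro x y
    by_cases hz : μ.p x y = 0
    · simp [hz]; exact mul_nonneg (Qm_nonneg μ x) (Tm_nonneg μ y)
    · have hp : 0 < μ.p x y := (μ.nonneg x y).lt_of_ne (Ne.symm hz)
      have hq : 0 < μ.Qm x * μ.Tm y :=
        mul_pos (hp.trans_le (p_le_Qm μ x y)) (hp.trans_le (p_le_Tm μ x y))
      rw [if_neg hz]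
      exact sub_le_mul_log hp hq
  have hsum : ∑ x, ∑ y, (μ.p x y - μ.Qm x * μ.Tm y) = 0 := by
    have h1 : ∑ x, ∑ y, μ.Qm x * μ.Tm y = 1 := by
      calc ∑ x, ∑ y, μ.Qm x * μ.Tm y = ∑ x, μ.Qm x * ∑ y, μ.Tm y := by
            apply Finset.sum_congr rfl; intro x _; rw [Finset.mul_sum]
      _ = 1 := by simp [sum_Tm μ, sum_Qm μ]
    have h2 : ∑ x, ∑ y, (μ.p x y - μ.Qm x * μ.Tm y)
        = (∑ x, ∑ y, μ.p x y) - ∑ x, ∑ y, μ.Qm x * μ.Tm y := by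
      rw [← Finset.sum_sub_distrib]
      apply Finset.sum_congr rfl; intro x _; rw [Finset.sum_sub_distrib]
    rw [h2, h1, μ.sum_one]; ring
  calc (0:ℝ) = ∑ x, ∑ y, (μ.p x y - μ.Qm x * μ.Tm y) := hsum.symm
  _ ≤ _ := Finset.sum_le_sum fun x _ => Finset.sum_le_sum fun y _ => key x y

lemma mutInfo_eq (μ : JointDist X Y) :
    mutInfo μ = (∑ x, ∑ y, μ.p x y * Real.log (μ.p x y))
      - (∑ x, μ.Qm x * Real.log (μ.Qm x)) - (∑ y, μ.Tm y * Real.log (μ.Tm y)) := by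
  unfold mutInfo
  have key : ∀ x y, (if μ.p x y = 0 then 0
        else μ.p x y * Real.log (μ.p x y / (μ.Qm x * μ.Tm y)))
      = μ.p x y * Real.log (μ.p x y) - μ.p x y * Real.log (μ.Qm x)
        - μ.p x y * Real.log (μ.Tm y) := by
    intro x y
    by_cases hz : μ.p x y = 0
    · simp [hz]
    · have hp : 0 < μ.p x y := (μ.nonneg x y).lt_of_ne (Ne.symm hz)
      have hQ : 0 < μ.Qm x := hp.trans_le (p_le_Qm μ x y)
      have hT : 0 < μ.Tm y := hp.trans_le (p_le_Tm μ x y)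
      rw [if_neg hz, Real.log_div hz (by positivity), Real.log_mul hQ.ne' hT.ne']
      ring
  simp only [key]
  have e1 : ∀ x, ∑ y, μ.p x y * Real.log (μ.Qm x) = μ.Qm x * Real.log (μ.Qm x) := by
    intro x; rw [← Finset.sum_mul]; rfl
  have e2 : ∀ y, ∑ x, μ.p x y * Real.log (μ.Tm y) = μ.Tm y * Real.log (μ.Tm y) := by
    intro y; rw [← Finset.sum_mul]; rfl
  have : ∑ x, ∑ y, (μ.p x y * Real.log (μ.p x y) - μ.p x y * Real.log (μ.Qm x)
        - μ.p x y * Real.log (μ.Tm y))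
      = ∑ x, ∑ y, μ.p x y * Real.log (μ.p x y)
        - ∑ x, ∑ y, μ.p x y * Real.log (μ.Qm x)
        - ∑ x, ∑ y, μ.p x y * Real.log (μ.Tm y) := by
    rw [← Finset.sum_sub_distrib, ← Finset.sum_sub_distrib]
    apply Finset.sum_congr rfl; intro x _
    rw [Finset.sum_sub_distrib, Finset.sum_sub_distrib]
  rw [this]
  congr 1
  · congr 1
    exact Finset.sum_congr rfl fun x _ => e1 x
  · rw [Finset.sum_comm]
    exact Finset.sum_congr rfl fun y _ => e2 y

end PlaneAux

namespace PlaneAux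

variable {X Y : Type} [Fintype X] [Fintype Y]

/-- Extension of `Fslope` to arbitrary nonnegative kernels, in a form suitable for
semicontinuity arguments. -/
noncomputable def Phi (P : X → Y → ℝ) (t : Fin 4 → ℝ) (f : X → ℝ) (ρ η : ℝ)
    (ν : JointDist X Y) (g : X → Y → ℝ) : EReal :=
  (∑ z : X × Y, kl (g z.1 z.2) ((∑ y, g z.1 y) * P z.1 z.2))
  + ((η * (∑ x, (∑ y, g x y) * f x)
      - ρ * ((∑ x, ∑ y, g x y * Real.log (g x y))
          - (∑ x, (∑ y, g x y) * Real.log (∑ y, g x y))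
          - (∑ y, (∑ x, g x y) * Real.log (∑ x, g x y))) : ℝ) : EReal)
  + (∑ x : X, kl ((1 - ρ) * t 0 * (∑ y, g x y)) ((1 - ρ) * t 0 * ν.Qm x))
  + (∑ z : X × Y, kl ((1 - ρ) * t 1 * g z.1 z.2)
      ((1 - ρ) * t 1 * ((∑ y, g z.1 y) * ν.Wc z.1 z.2)))
  + (∑ y : Y, kl ((1 - ρ) * t 2 * (∑ x, g x y)) ((1 - ρ) * t 2 * ν.Tm y))
  + (∑ z : Y × X, kl ((1 - ρ) * t 3 * g z.2 z.1)
      ((1 - ρ) * t 3 * ((∑ x, g x z.1) * ν.Vc z.1 z.2)))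

lemma lsc_kl_comp {E : Type*} [TopologicalSpace E] {A B : E → ℝ}
    (hA : Continuous A) (hB : Continuous B) :
    LowerSemicontinuous fun e => kl (A e) (B e) :=
  kl_lsc.comp (hA.prodMk hB)

lemma Phi_lsc (P : X → Y → ℝ) (t : Fin 4 → ℝ) (f : X → ℝ) (ρ η : ℝ)
    (ν : JointDist X Y) : LowerSemicontinuous (Phi P t f ρ η ν) := by
  have hev : ∀ (x : X) (y : Y), Continuous (fun g : X → Y → ℝ => g x y) :=
    fun x y => (continuous_apply y).comp (continuous_apply x)
  have hQ : ∀ x, Continuous (fun g : X → Y → ℝ => ∑ y, g x y) :=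
    fun x => continuous_finset_sum _ fun y _ => hev x y
  have hT : ∀ y, Continuous (fun g : X → Y → ℝ => ∑ x, g x y) :=
    fun y => continuous_finset_sum _ fun x _ => hev x y
  have hS1 : LowerSemicontinuous fun g : X → Y → ℝ =>
      ∑ z : X × Y, kl (g z.1 z.2) ((∑ y, g z.1 y) * P z.1 z.2) :=
    lsc_sum _ _ (fun z => lsc_kl_comp (hev z.1 z.2) ((hQ z.1).mul continuous_const))
      (fun z g => kl_ne_bot _ _)
  have hmid : Continuous fun g : X → Y → ℝ =>
      (η * (∑ x, (∑ y, g x y) * f x)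
      - ρ * ((∑ x, ∑ y, g x y * Real.log (g x y))
          - (∑ x, (∑ y, g x y) * Real.log (∑ y, g x y))
          - (∑ y, (∑ x, g x y) * Real.log (∑ x, g x y))) : ℝ) := by
    apply Continuous.sub
    · exact continuous_const.mul (continuous_finset_sum _ fun x _ => (hQ x).mul continuous_const)
    · apply continuous_const.mul
      apply Continuous.sub
      apply Continuous.sub
      · exact continuous_finset_sum _ fun x _ => continuous_finset_sum _ fun y _ =>
          Real.continuous_mul_log.comp (hev x y)
      · exact continuous_finset_sum _ fun x _ => Real.continuous_mul_log.comp (hQ x)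
      · exact continuous_finset_sum _ fun y _ => Real.continuous_mul_log.comp (hT y)
  have hS2 : LowerSemicontinuous fun g : X → Y → ℝ =>
      ∑ x : X, kl ((1 - ρ) * t 0 * (∑ y, g x y)) ((1 - ρ) * t 0 * ν.Qm x) :=
    lsc_sum _ _ (fun x => lsc_kl_comp (continuous_const.mul (hQ x)) continuous_const)
      (fun x g => kl_ne_bot _ _)
  have hS3 : LowerSemicontinuous fun g : X → Y → ℝ =>
      ∑ z : X × Y, kl ((1 - ρ) * t 1 * g z.1 z.2)
        ((1 - ρ) * t 1 * ((∑ y, g z.1 y) * ν.Wc z.1 z.2)) :=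
    lsc_sum _ _ (fun z => lsc_kl_comp (continuous_const.mul (hev z.1 z.2))
      (continuous_const.mul ((hQ z.1).mul continuous_const))) (fun z g => kl_ne_bot _ _)
  have hS4 : LowerSemicontinuous fun g : X → Y → ℝ =>
      ∑ y : Y, kl ((1 - ρ) * t 2 * (∑ x, g x y)) ((1 - ρ) * t 2 * ν.Tm y) :=
    lsc_sum _ _ (fun y => lsc_kl_comp (continuous_const.mul (hT y)) continuous_const)
      (fun y g => kl_ne_bot _ _)
  have hS5 : LowerSemicontinuous fun g : X → Y → ℝ =>
      ∑ z : Y × X, kl ((1 - ρ) * t 3 * g z.2 z.1)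
        ((1 - ρ) * t 3 * ((∑ x, g x z.1) * ν.Vc z.1 z.2)) :=
    lsc_sum _ _ (fun z => lsc_kl_comp (continuous_const.mul (hev z.2 z.1))
      (continuous_const.mul ((hT z.1).mul continuous_const))) (fun z g => kl_ne_bot _ _)
  have hmid' : LowerSemicontinuous fun g : X → Y → ℝ =>
      ((η * (∑ x, (∑ y, g x y) * f x)
      - ρ * ((∑ x, ∑ y, g x y * Real.log (g x y))
          - (∑ x, (∑ y, g x y) * Real.log (∑ y, g x y))
          - (∑ y, (∑ x, g x y) * Real.log (∑ x, g x y))) : ℝ) : EReal) :=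
    (continuous_coe_real_ereal.comp hmid).lowerSemicontinuous
  have nbadd : ∀ {u v : EReal}, u ≠ ⊥ → v ≠ ⊥ → u + v ≠ ⊥ := by
    intro u v hu hv h
    rcases EReal.add_eq_bot_iff.mp h with h | h
    · exact hu h
    · exact hv h
  have nb1 : ∀ g : X → Y → ℝ, (∑ z : X × Y, kl (g z.1 z.2) ((∑ y, g z.1 y) * P z.1 z.2)) ≠ ⊥ :=
    fun g => ereal_sum_ne_bot _ _ fun z => kl_ne_bot _ _
  have nbk : ∀ {ι : Type} [Fintype ι] (a b : ι → ℝ),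
      (∑ i : ι, kl (a i) (b i)) ≠ ⊥ := fun a b => ereal_sum_ne_bot _ _ fun i => kl_ne_bot _ _
  have L12 := lsc_add hS1 hmid' nb1 fun g => EReal.coe_ne_bot _
  have nb12 : ∀ g : X → Y → ℝ,
      (∑ z : X × Y, kl (g z.1 z.2) ((∑ y, g z.1 y) * P z.1 z.2))
      + ((η * (∑ x, (∑ y, g x y) * f x)
      - ρ * ((∑ x, ∑ y, g x y * Real.log (g x y))
          - (∑ x, (∑ y, g x y) * Real.log (∑ y, g x y))
          - (∑ y, (∑ x, g x y) * Real.log (∑ x, g x y))) : ℝ) : EReal) ≠ ⊥ :=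
    fun g => nbadd (nb1 g) (EReal.coe_ne_bot _)
  have L13 := lsc_add L12 hS2 nb12 fun g => nbk _ _
  have nb13 := fun g : X → Y → ℝ => nbadd (nb12 g)
    (nbk (fun x : X => (1 - ρ) * t 0 * (∑ y, g x y)) fun x => (1 - ρ) * t 0 * ν.Qm x)
  have L14 := lsc_add L13 hS3 nb13 fun g => nbk _ _
  have nb14 := fun g : X → Y → ℝ => nbadd (nb13 g)
    (nbk (fun z : X × Y => (1 - ρ) * t 1 * g z.1 z.2)
      fun z => (1 - ρ) * t 1 * ((∑ y, g z.1 y) * ν.Wc z.1 z.2))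
  have L15 := lsc_add L14 hS4 nb14 fun g => nbk _ _
  have nb15 := fun g : X → Y → ℝ => nbadd (nb14 g)
    (nbk (fun y : Y => (1 - ρ) * t 2 * (∑ x, g x y)) fun y => (1 - ρ) * t 2 * ν.Tm y)
  have L16 := lsc_add L15 hS5 nb15 fun g => nbk _ _
  exact L16

end PlaneAux

namespace PlaneAux

variable {X Y : Type} [Fintype X] [Fintype Y]

/-- The simplex of joint pmfs, as a subset of the function space. -/
def Kset (X Y : Type) [Fintype X] [Fintype Y] : Set (X → Y → ℝ) :=
  {g | (∀ x y, 0 ≤ g x y) ∧ ∑ x, ∑ y, g x y = 1}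

lemma isCompact_Kset : IsCompact (Kset X Y) := by
  have hev : ∀ (x : X) (y : Y), Continuous (fun g : X → Y → ℝ => g x y) :=
    fun x y => (continuous_apply y).comp (continuous_apply x)
  have hclosed : IsClosed (Kset X Y) := by
    have h1 : IsClosed {g : X → Y → ℝ | ∀ x y, 0 ≤ g x y} := by
      have : {g : X → Y → ℝ | ∀ x y, 0 ≤ g x y} = ⋂ x, ⋂ y, {g | 0 ≤ g x y} := by
        ext g; simp [Set.mem_iInter]
      rw [this]
      exact isClosed_iInter fun x => isClosed_iInter fun y =>
        isClosed_le continuous_const (hev x y)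
    have h2 : IsClosed {g : X → Y → ℝ | ∑ x, ∑ y, g x y = 1} :=
      isClosed_eq (continuous_finset_sum _ fun x _ => continuous_finset_sum _
        fun y _ => hev x y) continuous_const
    exact h1.inter h2
  have hsub : Kset X Y ⊆ Set.univ.pi fun _ : X => Set.univ.pi fun _ : Y => Set.Icc (0:ℝ) 1 := by
    rintro g ⟨hg0, hg1⟩
    rw [Set.mem_pi]
    intro x _
    rw [Set.mem_pi]
    intro y _
    refine ⟨hg0 x y, ?_⟩
    calc g x y ≤ ∑ y', g x y' :=
          Finset.single_le_sum (fun y' _ => hg0 x y') (Finset.mem_univ y)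
    _ ≤ ∑ x', ∑ y', g x' y' :=
          Finset.single_le_sum (fun x' _ => Finset.sum_nonneg fun y' _ => hg0 x' y')
            (Finset.mem_univ x)
    _ = 1 := hg1
  exact IsCompact.of_isClosed_subset
    (isCompact_univ_pi fun _ => isCompact_univ_pi fun _ => isCompact_Icc) hclosed hsub

lemma Phi_eq (P : X → Y → ℝ) (hP : ∀ x y, 0 ≤ P x y) (t : Fin 4 → ℝ) (ht : ∀ i, 0 ≤ t i)
    (f : X → ℝ) (ρ η : ℝ) (hρ1 : ρ < 1) (ν μ : JointDist X Y) :
    Phi P t f ρ η ν μ.p = Fslope P t f ρ η μ ν := by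
  have hρ' : (0:ℝ) ≤ 1 - ρ := by linarith
  have hQ : ∀ x, ∑ y, μ.p x y = μ.Qm x := fun _ => rfl
  have hT : ∀ y, ∑ x, μ.p x y = μ.Tm y := fun _ => rfl
  unfold Phi
  simp only [hQ, hT]
  -- identify the five KL blocks
  rw [klSum_eq_relEnt (fun z : X × Y => μ.p z.1 z.2) (fun z => μ.Qm z.1 * P z.1 z.2)
      (fun z => μ.nonneg _ _) (fun z => mul_nonneg (Qm_nonneg μ _) (hP _ _)),
    ← condW_repr μ P]
  rw [klSum_scaled ((1 - ρ) * t 0) (mul_nonneg hρ' (ht 0)) μ.Qm ν.Qm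
      (Qm_nonneg μ) (Qm_nonneg ν)]
  rw [klSum_scaled ((1 - ρ) * t 1) (mul_nonneg hρ' (ht 1))
      (fun z : X × Y => μ.p z.1 z.2) (fun z => μ.Qm z.1 * ν.Wc z.1 z.2)
      (fun z => μ.nonneg _ _) (fun z => mul_nonneg (Qm_nonneg μ _) (Wc_nonneg ν _ _)),
    ← condW_repr μ ν.Wc]
  rw [klSum_scaled ((1 - ρ) * t 2) (mul_nonneg hρ' (ht 2)) μ.Tm ν.Tm
      (Tm_nonneg μ) (Tm_nonneg ν)]
  rw [klSum_scaled ((1 - ρ) * t 3) (mul_nonneg hρ' (ht 3))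
      (fun z : Y × X => μ.p z.2 z.1) (fun z => μ.Tm z.1 * ν.Vc z.1 z.2)
      (fun z => μ.nonneg _ _) (fun z => mul_nonneg (Tm_nonneg μ _) (Vc_nonneg ν _ _)),
    ← condV_repr μ ν.Vc]
  -- now massage the right-hand side
  unfold Fslope Dt
  have hmE : (∑ x, μ.Qm x * f x) = expCost f μ := rfl
  have hmI : (∑ x, ∑ y, μ.p x y * Real.log (μ.p x y))
      - (∑ x, μ.Qm x * Real.log (μ.Qm x)) - (∑ y, μ.Tm y * Real.log (μ.Tm y))
      = mutInfo μ := (mutInfo_eq μ).symm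
  rw [hmE, hmI]
  -- distribute (1-ρ) over the four nonnegative Dt terms
  have h0 : ∀ i, (0:EReal) ≤ (t i : EReal) := fun i => EReal.coe_nonneg.mpr (ht i)
  have n0 : (0:EReal) ≤ (t 0 : EReal) * relEnt μ.Qm ν.Qm :=
    mul_nonneg (h0 0) (relEnt_Qm_nonneg μ ν)
  have n1 : (0:EReal) ≤ (t 1 : EReal) * condRelEnt μ.Qm μ.Wc ν.Wc :=
    mul_nonneg (h0 1) (condW_nonneg μ ν)
  have n2 : (0:EReal) ≤ (t 2 : EReal) * relEnt μ.Tm ν.Tm :=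
    mul_nonneg (h0 2) (relEnt_Tm_nonneg μ ν)
  have n3 : (0:EReal) ≤ (t 3 : EReal) * condRelEnt μ.Tm μ.Vc ν.Vc :=
    mul_nonneg (h0 3) (condV_nonneg μ ν)
  have hdist : ((1 - ρ : ℝ) : EReal) * ((t 0 : EReal) * relEnt μ.Qm ν.Qm
        + (t 1 : EReal) * condRelEnt μ.Qm μ.Wc ν.Wc
        + (t 2 : EReal) * relEnt μ.Tm ν.Tm
        + (t 3 : EReal) * condRelEnt μ.Tm μ.Vc ν.Vc)
      = ((1 - ρ : ℝ) : EReal) * ((t 0 : EReal) * relEnt μ.Qm ν.Qm)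
        + ((1 - ρ : ℝ) : EReal) * ((t 1 : EReal) * condRelEnt μ.Qm μ.Wc ν.Wc)
        + ((1 - ρ : ℝ) : EReal) * ((t 2 : EReal) * relEnt μ.Tm ν.Tm)
        + ((1 - ρ : ℝ) : EReal) * ((t 3 : EReal) * condRelEnt μ.Tm μ.Vc ν.Vc) := by
    rw [EReal.left_distrib_of_nonneg (add_nonneg (add_nonneg n0 n1) n2) n3,
      EReal.left_distrib_of_nonneg (add_nonneg n0 n1) n2,
      EReal.left_distrib_of_nonneg n0 n1]
  rw [hdist]
  have hco : ∀ (i : Fin 4) (v : EReal), (((1 - ρ) * t i : ℝ) : EReal) * v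
      = ((1 - ρ : ℝ) : EReal) * ((t i : EReal) * v) := by
    intro i v; rw [EReal.coe_mul, mul_assoc]
  rw [hco 0, hco 1, hco 2, hco 3]
  -- finally rearrange the real part
  have hsub : condDivP P μ - ((ρ * mutInfo μ : ℝ) : EReal) + ((η * expCost f μ : ℝ) : EReal)
      = condDivP P μ + ((η * expCost f μ - ρ * mutInfo μ : ℝ) : EReal) := by
    rw [sub_eq_add_neg, add_assoc]
    congr 1
    rw [← EReal.coe_neg, ← EReal.coe_add]
    norm_cast
    ring
  rw [hsub]
  show condRelEnt μ.Qm μ.Wc P + _ + _ + _ + _ + _ = condDivP P μ + _ + (_ + _ + _ + _)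
  unfold condDivP
  abel

end PlaneAux

namespace PlaneAux

variable {X Y : Type} [Fintype X] [Fintype Y]

lemma exists_coe {v : EReal} (hb : v ≠ ⊥) (ht : v ≠ ⊤) : ∃ r : ℝ, v = (r : EReal) := by
  induction v using EReal.rec with
  | bot => exact absurd rfl hb
  | top => exact absurd rfl ht
  | coe r => exact ⟨r, rfl⟩

lemma Fslope_coe (P : X → Y → ℝ) (t : Fin 4 → ℝ) (f : X → ℝ) (ρ η : ℝ)
    (μ ν : JointDist X Y) {d dt : ℝ} (hD : condDivP P μ = (d : EReal))
    (hDt : Dt t μ ν = (dt : EReal)) :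
    Fslope P t f ρ η μ ν
      = ((d - ρ * mutInfo μ + η * expCost f μ + (1 - ρ) * dt : ℝ) : EReal) := by
  unfold Fslope
  rw [hD, hDt]
  norm_cast

lemma F1_coe (P : X → Y → ℝ) (t : Fin 4 → ℝ) (μ ν : JointDist X Y) {d dt : ℝ}
    (hD : condDivP P μ = (d : EReal)) (hDt : Dt t μ ν = (dt : EReal)) :
    F1 P t μ ν = ((d + dt : ℝ) : EReal) := by
  unfold F1; rw [hD, hDt]; norm_cast

lemma F2_coe (P : X → Y → ℝ) (R : ℝ) (μ : JointDist X Y) {d : ℝ}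
    (hD : condDivP P μ = (d : EReal)) :
    F2 P R μ = ((d - mutInfo μ + R : ℝ) : EReal) := by
  unfold F2; rw [hD]; norm_cast

lemma Dt_cases (t : Fin 4 → ℝ) (ht : ∀ i, 0 ≤ t i) (μ ν : JointDist X Y) :
    Dt t μ ν = ⊤ ∨ ∃ d : ℝ, Dt t μ ν = (d : EReal) ∧ 0 ≤ d := by
  have h0 : 0 ≤ Dt t μ ν := Dt_nonneg t ht μ ν
  by_cases h : Dt t μ ν = ⊤
  · exact Or.inl h
  · obtain ⟨d, hd⟩ := exists_coe (ne_bot_of_nonneg h0) h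
    refine Or.inr ⟨d, hd, ?_⟩
    rw [hd] at h0; exact_mod_cast h0

end PlaneAux

/-- Tightness of the supporting plane: if `E₀^t(ρ, η, Q̃W̃)` is finite, there
exist `R ≥ 0` and `α ≥ min_x f(x)` with
`E_c^t(Q̃W̃, R, α) = E₀^t(ρ, η, Q̃W̃) + ρR − ηα`. -/
theorem stmt12 {X Y : Type} [Fintype X] [Fintype Y]
    (P : X → Y → ℝ) (hP : ∀ x y, 0 ≤ P x y) (hPsum : ∀ x, ∑ y : Y, P x y = 1)
    (t : Fin 4 → ℝ) (ht : ∀ i, 0 ≤ t i)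
    (f : X → ℝ) (ρ η : ℝ) (hρ0 : 0 ≤ ρ) (hρ1 : ρ < 1) (hη : 0 ≤ η)
    (ν : JointDist X Y)
    (hfin : E0 P t f ρ η ν ≠ ⊤ ∧ E0 P t f ρ η ν ≠ ⊥) :
    ∃ R α : ℝ, 0 ≤ R ∧ (∃ x, f x ≤ α) ∧
      Ec P t f R α ν = E0 P t f ρ η ν + ((ρ * R - η * α : ℝ) : EReal) := by
  classical
  obtain ⟨hfT, hfB⟩ := hfin
  obtain ⟨mr, hmr⟩ := PlaneAux.exists_coe hfB hfT
  -- the range of Fslope is the image of Phi on the compact simplex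
  have hset : Set.range (fun μ : JointDist X Y => Fslope P t f ρ η μ ν)
      = PlaneAux.Phi P t f ρ η ν '' PlaneAux.Kset X Y := by
    ext v
    constructor
    · rintro ⟨μ, rfl⟩
      exact ⟨μ.p, ⟨μ.nonneg, μ.sum_one⟩, PlaneAux.Phi_eq P hP t ht f ρ η hρ1 ν μ⟩
    · rintro ⟨g, hg, rfl⟩
      exact ⟨⟨g, hg.1, hg.2⟩, (PlaneAux.Phi_eq P hP t ht f ρ η hρ1 ν ⟨g, hg.1, hg.2⟩).symm⟩
  have hminf : sInf (PlaneAux.Phi P t f ρ η ν '' PlaneAux.Kset X Y) = (mr : EReal) := by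
    rw [← hset, ← hmr]; rfl
  obtain ⟨g0, hg0K, hg0min⟩ := PlaneAux.exists_min_on_compact PlaneAux.isCompact_Kset _
    (PlaneAux.Phi_lsc P t f ρ η ν) hminf
  set μs : JointDist X Y := ⟨g0, hg0K.1, hg0K.2⟩ with hμsdef
  have hFs : Fslope P t f ρ η μs ν = (mr : EReal) := by
    rw [← PlaneAux.Phi_eq P hP t ht f ρ η hρ1 ν μs]
    exact hg0min
  -- finiteness of the parts at the minimizer
  have hDtnb : Dt t μs ν ≠ ⊥ :=
    PlaneAux.ne_bot_of_nonneg (PlaneAux.Dt_nonneg t ht μs ν)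
  have hρ1' : (0:ℝ) < 1 - ρ := by linarith
  obtain ⟨dr, hdr⟩ : ∃ d : ℝ, condDivP P μs = (d : EReal) := by
    rcases PlaneAux.condDivP_cases P μs with h | h
    · exfalso
      have : Fslope P t f ρ η μs ν = ⊤ := by
        unfold Fslope
        rw [h, EReal.top_sub_coe, EReal.top_add_coe]
        refine EReal.top_add_of_ne_bot ?_
        exact PlaneAux.ne_bot_of_nonneg (mul_nonneg (by exact_mod_cast hρ1'.le)
          (PlaneAux.Dt_nonneg t ht μs ν))
      rw [this] at hFs
      exact (EReal.coe_ne_top mr) hFs.symm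
    · exact h
  obtain ⟨dtr, hdtr, hdtr0⟩ : ∃ d : ℝ, Dt t μs ν = (d : EReal) ∧ 0 ≤ d := by
    rcases PlaneAux.Dt_cases t ht μs ν with h | h
    · exfalso
      have : Fslope P t f ρ η μs ν = ⊤ := by
        unfold Fslope
        rw [h, hdr]
        rw [EReal.coe_mul_top_of_pos (by exact_mod_cast hρ1')]
        rw [show ((dr : EReal) - ((ρ * mutInfo μs : ℝ) : EReal)
          + ((η * expCost f μs : ℝ) : EReal))
          = ((dr - ρ * mutInfo μs + η * expCost f μs : ℝ) : EReal) by norm_cast]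
        exact EReal.coe_add_top _
      rw [this] at hFs
      exact (EReal.coe_ne_top mr) hFs.symm
    · exact h
  have he0r : mr = dr - ρ * mutInfo μs + η * expCost f μs + (1 - ρ) * dtr := by
    have := PlaneAux.Fslope_coe P t f ρ η μs ν hdr hdtr
    rw [this] at hFs
    exact_mod_cast hFs.symm
  -- choose R and α
  set Iμ : ℝ := mutInfo μs with hIdef
  set Eμ : ℝ := expCost f μs with hEdef
  have hI0 : 0 ≤ Iμ := PlaneAux.mutInfo_nonneg μs
  refine ⟨Iμ + dtr, Eμ, add_nonneg hI0 hdtr0, ?_, ?_⟩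
  · -- α is at least the min of f
    have hXne : Nonempty X := by
      by_contra h
      rw [not_nonempty_iff] at h
      have := μs.sum_one
      rw [Finset.univ_eq_empty, Finset.sum_empty] at this
      norm_num at this
    obtain ⟨x₀, _, hx₀⟩ := Finset.exists_min_image Finset.univ f Finset.univ_nonempty
    refine ⟨x₀, ?_⟩
    calc f x₀ = (∑ x, μs.Qm x) * f x₀ := by rw [PlaneAux.sum_Qm]; ring
    _ = ∑ x, μs.Qm x * f x₀ := Finset.sum_mul _ _ _
    _ ≤ ∑ x, μs.Qm x * f x := Finset.sum_le_sum fun x _ =>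
          mul_le_mul_of_nonneg_left (hx₀ x (Finset.mem_univ x)) (PlaneAux.Qm_nonneg μs x)
    _ = Eμ := rfl
  · -- the main equality
    set R : ℝ := Iμ + dtr
    set α : ℝ := Eμ
    have hval : mr + (ρ * R - η * α) = dr + dtr := by
      rw [he0r]; simp only [R, α]; ring
    rw [hmr]
    rw [show ((mr : EReal) + ((ρ * R - η * α : ℝ) : EReal))
      = ((mr + (ρ * R - η * α) : ℝ) : EReal) by norm_cast]
    rw [hval]
    -- Ec = ↑(dr + dtr)
    apply le_antisymm
    · -- upper bound: the minimizer is feasible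
      apply sInf_le
      refine ⟨μs, by simp [Set.mem_setOf_eq, α, Eμ], ?_⟩
      unfold Fr
      dsimp only
      rw [PlaneAux.F1_coe P t μs ν hdr hdtr, PlaneAux.F2_coe P R μs hdr]
      rw [show (dr - mutInfo μs + R : ℝ) = dr + dtr by simp only [R]; ring]
      exact max_self _
    · -- lower bound
      apply le_sInf
      rintro b ⟨μ, hμα, rfl⟩
      rw [Set.mem_setOf_eq] at hμα
      have hDtμnb : Dt t μ ν ≠ ⊥ :=
        PlaneAux.ne_bot_of_nonneg (PlaneAux.Dt_nonneg t ht μ ν)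
      rcases PlaneAux.condDivP_cases P μ with h | ⟨d, hd⟩
      · have hF1 : F1 P t μ ν = ⊤ := by
          unfold F1; rw [h]; exact EReal.top_add_of_ne_bot hDtμnb
        unfold Fr; dsimp only
        calc ((dr + dtr : ℝ) : EReal) ≤ ⊤ := le_top
        _ ≤ _ := by rw [← hF1]; exact le_max_left _ _
      rcases PlaneAux.Dt_cases t ht μ ν with h | ⟨dt', hdt', hdt'0⟩
      · have hF1 : F1 P t μ ν = ⊤ := by
          unfold F1; rw [h, hd]; exact EReal.coe_add_top _
        unfold Fr; dsimp only
        calc ((dr + dtr : ℝ) : EReal) ≤ ⊤ := le_top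
        _ ≤ _ := by rw [← hF1]; exact le_max_left _ _
      · -- both parts finite: use the convexity bound
        have hFμ : Fslope P t f ρ η μ ν
            = ((d - ρ * mutInfo μ + η * expCost f μ + (1 - ρ) * dt' : ℝ) : EReal) :=
          PlaneAux.Fslope_coe P t f ρ η μ ν hd hdt'
        have hle : (mr : EReal) ≤ Fslope P t f ρ η μ ν := by
          rw [← hmr]
          exact sInf_le ⟨μ, rfl⟩
        rw [hFμ] at hle
        have hler : mr ≤ d - ρ * mutInfo μ + η * expCost f μ + (1 - ρ) * dt' := by
          exact_mod_cast hle
        have hreal : dr + dtr ≤ max (d + dt') (d - mutInfo μ + R) := by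
          set M : ℝ := max (d + dt') (d - mutInfo μ + R) with hM
          have h1 : d + dt' ≤ M := le_max_left _ _
          have h2 : d - mutInfo μ + R ≤ M := le_max_right _ _
          have h3 : (1 - ρ) * (d + dt') ≤ (1 - ρ) * M :=
            mul_le_mul_of_nonneg_left h1 hρ1'.le
          have h4 : ρ * (d - mutInfo μ + R) ≤ ρ * M :=
            mul_le_mul_of_nonneg_left h2 hρ0
          have h5 : η * expCost f μ ≤ η * α := mul_le_mul_of_nonneg_left hμα hη
          have hcombo : (1 - ρ) * (d + dt') + ρ * (d - mutInfo μ + R)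
              = (d - ρ * mutInfo μ + η * expCost f μ + (1 - ρ) * dt')
                + ρ * R - η * expCost f μ := by ring
          have hvr : dr + dtr = mr + (ρ * R - η * α) := hval.symm ▸ rfl
          nlinarith [hler, h3, h4, h5, hcombo, hvr]
        unfold Fr
        dsimp only
        rw [PlaneAux.F1_coe P t μ ν hd hdt', PlaneAux.F2_coe P R μ hd]
        rcases le_max_iff.mp hreal with h | h
        · exact le_trans (by exact_mod_cast h) (le_max_left _ _)
        · exact le_trans (by exact_mod_cast h) (le_max_right _ _)
end
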